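/- (Recovering PLCP from its irreducible values.) Let I = {i ∈ [0, n) : PLCP[i] is irreducible}. Then 0 ∈ I, and for every i ∈ [0, n), letting p = max{j ∈ I : j ≤ i} (which exists since 0 ∈ I), it holds that PLCP[i] = PLCP[p] − (i − p). -/

import Mathlib

/-- The suffix `T[i..n−1]` of a text of length `n`, as a list. -/
def sfx {α : Type*} (T : ℕ → α) (n i : ℕ) : List α :=
  (List.range (n - i)).map (fun k => T (i + k))

/-- Length of the longest common prefix of two strings (as lists). -/
def lcp {α : Type*} [DecidableEq α] : List α → List α → ℕ
  | a :: as, b :: bs => if a = b then lcp as bs + 1 else 0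
  | _, _ => 0

section Aux

variable {α : Type*} [LinearOrder α]

lemma lcp_nil_left (v : List α) : lcp [] v = 0 := by cases v <;> rfl
lemma lcp_nil_right (u : List α) : lcp u [] = 0 := by cases u <;> rfl
lemma lcp_cons_same (x : α) (u v : List α) : lcp (x::u) (x::v) = lcp u v + 1 := by
  simp [lcp]

lemma lcp_le_left : ∀ u v : List α, lcp u v ≤ u.length
  | [], v => by simp [lcp_nil_left]
  | u, [] => by simp [lcp_nil_right]
  | a::u, b::v => by
    by_cases h : a = b
    · subst h; rw [lcp_cons_same]; simpa using lcp_le_left u v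
    · simp [lcp, h]

lemma lcp_heads_eq {x y : α} {u v : List α} (h : 0 < lcp (x::u) (y::v)) : x = y := by
  by_contra hne; simp [lcp, hne] at h

lemma lcp_mono : ∀ (a b c : List α), (List.Lex (· < ·) a b ∨ a = b) →
    List.Lex (· < ·) b c → lcp a c ≤ lcp b c
  | [], b, c, _, _ => by simp [lcp_nil_left]
  | a::as, b, [], _, hbc => by cases hbc
  | x::as, b, z::cs, hab, hbc => by
    by_cases hxz : x = z
    · subst hxz
      cases b with
      | nil =>
        rcases hab with h | h
        · cases h
        · simp at h
      | cons y bs =>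
        have hyx : y = x ∧ (List.Lex (· < ·) as bs ∨ as = bs) := by
          rcases hab with h | h
          · cases h with
            | cons h => exact ⟨rfl, Or.inl h⟩
            | rel h =>
              cases hbc with
              | cons h' => exact absurd h (lt_irrefl _)
              | rel h' => exact absurd (h.trans h') (lt_irrefl _)
          · obtain ⟨rfl, rfl⟩ := by simpa using h.symm
            exact ⟨rfl, Or.inr rfl⟩
        obtain ⟨rfl, hab'⟩ := hyx
        have hbc' : List.Lex (· < ·) bs cs := by
          cases hbc with
          | cons h => exact h
          | rel h => exact absurd h (lt_irrefl _)
        rw [lcp_cons_same, lcp_cons_same]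
        exact Nat.succ_le_succ (lcp_mono as bs cs hab' hbc')
    · simp [lcp, hxz]

omit [LinearOrder α] in
lemma sfx_cons (T : ℕ → α) {n j : ℕ} (h : j < n) :
    sfx T n j = T j :: sfx T n (j+1) := by
  unfold sfx
  have h1 : n - j = (n - (j+1)) + 1 := by omega
  rw [h1, List.range_succ_eq_map, List.map_cons, List.map_map]
  congr 1
  apply List.map_congr_left
  intro k _
  simp [Function.comp, Nat.succ_eq_add_one]
  ring_nf

omit [LinearOrder α] in
lemma sfx_length (T : ℕ → α) (n j : ℕ) : (sfx T n j).length = n - j := by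
  simp [sfx]

end Aux

/-- recovering PLCP from its irreducible values: with
`I = {i ∈ [0,n) : PLCP[i] is irreducible}`, we have `0 ∈ I`, and for every
`i < n`, letting `p` be the greatest element of `I` with `p ≤ i`,
`PLCP[i] = PLCP[p] − (i − p)` (stated as `PLCP[i] + (i − p) = PLCP[p]`). -/
theorem plcp_from_irreducible
    {α : Type*} [LinearOrder α] (n : ℕ) (hn : 1 ≤ n) (T : ℕ → α)
    (hsent : ∀ i, i < n - 1 → T (n - 1) < T i)
    (SA ISA : ℕ → ℕ)
    (hSA : ∀ i, i < n → SA i < n)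
    (hmono : ∀ i j, i < j → j < n → sfx T n (SA i) < sfx T n (SA j))
    (hISA : ∀ i, i < n → ISA i < n ∧ ISA (SA i) = i ∧ SA (ISA i) = i)
    (BWT : ℕ → α)
    (hBWT : ∀ k, k < n → BWT k = T ((SA k + n - 1) % n))
    (PLCP : ℕ → ℕ)
    (hPLCP : ∀ i, i < n → PLCP i =
      if ISA i = 0 then 0
      else lcp (sfx T n (SA (ISA i - 1))) (sfx T n (SA (ISA i))))
    (I : Finset ℕ)
    (hI : I = (Finset.range n).filter
      (fun i => ISA i = 0 ∨ BWT (ISA i) ≠ BWT (ISA i - 1))) :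
    0 ∈ I ∧
    ∀ i, i < n → ∀ p, IsGreatest {j | j ∈ I ∧ j ≤ i} p →
      PLCP i + (i - p) = PLCP p := by
  -- basic tools
  have hlexmono : ∀ i j, i < j → j < n →
      List.Lex (· < ·) (sfx T n (SA i)) (sfx T n (SA j)) := fun i j h h' => hmono i j h h'
  have hasymm : ∀ {u v : List α}, List.Lex (· < ·) u v → List.Lex (· < ·) v u → False :=
    fun {u v} h h' => (List.Lex.asymm (α := α) (· < ·)).asymm _ _ h h'
  have hinj : ∀ a b, a < n → b < n → SA a = SA b → a = b := by
    intro a b ha hb h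
    have h1 := (hISA a ha).2.1
    have h2 := (hISA b hb).2.1
    rw [← h1, h, h2]
  have hrank : ∀ a b, a < n → b < n →
      List.Lex (· < ·) (sfx T n a) (sfx T n b) → ISA a < ISA b := by
    intro a b ha hb h
    obtain ⟨ha1, ha2, ha3⟩ := hISA a ha
    obtain ⟨hb1, hb2, hb3⟩ := hISA b hb
    rcases lt_trichotomy (ISA a) (ISA b) with hh | hh | hh
    · exact hh
    · exfalso
      have : a = b := by rw [← ha3, ← hb3, hh]
      rw [this] at h
      exact hasymm h h
    · exfalso
      have h2 := hlexmono (ISA b) (ISA a) hh ha1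
      rw [ha3, hb3] at h2
      exact hasymm h h2
  have hmod : ∀ m, 1 ≤ m → m < n → (m + n - 1) % n = m - 1 := by
    intro m h1 h2
    have e : m + n - 1 = (m - 1) + n := by omega
    rw [e, Nat.add_mod_right]
    exact Nat.mod_eq_of_lt (by omega)
  have hbwtT : ∀ k, k < n → 1 ≤ SA k → BWT k = T (SA k - 1) := by
    intro k hk h1
    rw [hBWT k hk, hmod _ h1 (hSA k hk)]
  have hbwt0 : ∀ k, k < n → SA k = 0 → BWT k = T (n - 1) := by
    intro k hk h0
    rw [hBWT k hk, h0]
    congr 1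
    simpa using Nat.mod_eq_of_lt (show n - 1 < n by omega)
  -- 0 is irreducible
  have hzero : 0 ∈ I := by
    rw [hI]
    simp only [Finset.mem_filter, Finset.mem_range]
    refine ⟨by omega, ?_⟩
    by_cases h0 : ISA 0 = 0
    · exact Or.inl h0
    right
    obtain ⟨hrn, -, hSAr⟩ := hISA 0 (by omega)
    have hB1 : BWT (ISA 0) = T (n - 1) := hbwt0 _ hrn hSAr
    have hm : SA (ISA 0 - 1) < n := hSA _ (by omega)
    have hm0 : SA (ISA 0 - 1) ≠ 0 := by
      intro h
      have := hinj (ISA 0 - 1) (ISA 0) (by omega) hrn (by rw [h, hSAr])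
      omega
    have hB2 : BWT (ISA 0 - 1) = T (SA (ISA 0 - 1) - 1) := hbwtT _ (by omega) (by omega)
    have hlt := hsent (SA (ISA 0 - 1) - 1) (by omega)
    rw [hB1, hB2]
    intro h
    rw [h] at hlt
    exact lt_irrefl _ hlt
  -- the key step for reducible positions
  have step : ∀ i, 0 < i → i < n → i ∉ I → PLCP i + 1 = PLCP (i - 1) := by
    intro i hi0 hin hni
    have hi1 : i - 1 < n := by omega
    obtain ⟨hrn, hrSA, hSAr⟩ := hISA i hin
    have hred : ISA i ≠ 0 ∧ BWT (ISA i) = BWT (ISA i - 1) := by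
      rw [hI] at hni
      simp only [Finset.mem_filter, Finset.mem_range, hin, true_and] at hni
      push_neg at hni
      exact hni
    obtain ⟨hr0, hbeq⟩ := hred
    have hr1n : ISA i - 1 < n := by omega
    have hqn : SA (ISA i - 1) < n := hSA _ hr1n
    have hqi : SA (ISA i - 1) ≠ i := by
      intro h
      have := hinj (ISA i - 1) (ISA i) hr1n hrn (by rw [h, hSAr])
      omega
    have hBr : BWT (ISA i) = T (i - 1) := by
      rw [hbwtT (ISA i) hrn (by rw [hSAr]; omega), hSAr]
    have hq1 : 1 ≤ SA (ISA i - 1) := by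
      by_contra h
      have hq0 : SA (ISA i - 1) = 0 := by omega
      have hB1 : BWT (ISA i - 1) = T (n - 1) := hbwt0 _ hr1n hq0
      have hlt := hsent (i - 1) (by omega)
      rw [hBr, hB1] at hbeq
      rw [hbeq] at hlt
      exact lt_irrefl _ hlt
    have hc : T (SA (ISA i - 1) - 1) = T (i - 1) := by
      rw [← hbwtT (ISA i - 1) hr1n hq1, ← hbeq, hBr]
    have hlexqi : List.Lex (· < ·) (sfx T n (SA (ISA i - 1))) (sfx T n i) := by
      have h := hlexmono (ISA i - 1) (ISA i) (by omega) hrn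
      rwa [hSAr] at h
    have eq1 : SA (ISA i - 1) - 1 + 1 = SA (ISA i - 1) := by omega
    have eq2 : i - 1 + 1 = i := by omega
    have hlex1 : List.Lex (· < ·) (sfx T n (SA (ISA i - 1) - 1)) (sfx T n (i - 1)) := by
      rw [sfx_cons T (show SA (ISA i - 1) - 1 < n by omega),
        sfx_cons T (show i - 1 < n by omega), eq1, eq2, hc]
      exact List.Lex.cons hlexqi
    obtain ⟨hsn, hsSA, hSAs⟩ := hISA (i - 1) hi1
    have hrk1 : ISA (SA (ISA i - 1) - 1) < ISA (i - 1) :=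
      hrank _ _ (by omega) hi1 hlex1
    have hs0 : 0 < ISA (i - 1) := by omega
    have hPi1 : PLCP (i - 1) =
        lcp (sfx T n (SA (ISA (i - 1) - 1))) (sfx T n (i - 1)) := by
      rw [hPLCP (i - 1) hi1, if_neg (by omega), hSAs]
    have hPi : PLCP i = lcp (sfx T n (SA (ISA i - 1))) (sfx T n i) := by
      rw [hPLCP i hin, if_neg hr0, hSAr]
    have hbc : List.Lex (· < ·) (sfx T n (SA (ISA (i - 1) - 1))) (sfx T n (i - 1)) := by
      have h := hlexmono (ISA (i - 1) - 1) (ISA (i - 1)) (by omega) hsn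
      rwa [hSAs] at h
    have hab : List.Lex (· < ·) (sfx T n (SA (ISA i - 1) - 1))
        (sfx T n (SA (ISA (i - 1) - 1))) ∨
        sfx T n (SA (ISA i - 1) - 1) = sfx T n (SA (ISA (i - 1) - 1)) := by
      rcases eq_or_lt_of_le (show ISA (SA (ISA i - 1) - 1) ≤ ISA (i - 1) - 1 by omega)
        with h | h
      · right
        have h3 := (hISA (SA (ISA i - 1) - 1) (by omega)).2.2
        rw [← h, h3]
      · left
        have h3 := (hISA (SA (ISA i - 1) - 1) (by omega)).2.2
        have h4 := hlexmono _ _ h (by omega)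
        rwa [h3] at h4
    have hA : PLCP i + 1 ≤ PLCP (i - 1) := by
      have h1 := lcp_mono _ _ _ hab hbc
      have h2 : lcp (sfx T n (SA (ISA i - 1) - 1)) (sfx T n (i - 1)) = PLCP i + 1 := by
        rw [sfx_cons T (show SA (ISA i - 1) - 1 < n by omega),
          sfx_cons T (show i - 1 < n by omega), eq1, eq2, hc, lcp_cons_same, hPi]
      rw [h2, ← hPi1] at h1
      exact h1
    have hB : PLCP (i - 1) ≤ PLCP i + 1 := by
      by_cases hl2 : PLCP (i - 1) ≤ 1
      · omega
      have hq'n : SA (ISA (i - 1) - 1) < n := hSA _ (by omega)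
      have hlen : lcp (sfx T n (SA (ISA (i - 1) - 1))) (sfx T n (i - 1)) ≤
          n - SA (ISA (i - 1) - 1) := by
        have h := lcp_le_left (sfx T n (SA (ISA (i - 1) - 1))) (sfx T n (i - 1))
        rwa [sfx_length] at h
      have hq'1 : SA (ISA (i - 1) - 1) + 1 < n := by omega
      have hcq : sfx T n (SA (ISA (i - 1) - 1)) =
          T (SA (ISA (i - 1) - 1)) :: sfx T n (SA (ISA (i - 1) - 1) + 1) :=
        sfx_cons T hq'n
      have hci : sfx T n (i - 1) = T (i - 1) :: sfx T n i := by
        rw [sfx_cons T (show i - 1 < n by omega), eq2]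
      have hheads : T (SA (ISA (i - 1) - 1)) = T (i - 1) := by
        apply lcp_heads_eq (u := sfx T n (SA (ISA (i - 1) - 1) + 1)) (v := sfx T n i)
        rw [← hcq, ← hci, ← hPi1]
        omega
      have hval : PLCP (i - 1) =
          lcp (sfx T n (SA (ISA (i - 1) - 1) + 1)) (sfx T n i) + 1 := by
        rw [hPi1, hcq, hci, hheads, lcp_cons_same]
      have hlex2 : List.Lex (· < ·) (sfx T n (SA (ISA (i - 1) - 1) + 1)) (sfx T n i) := by
        have h := hbc
        rw [hcq, hci, hheads] at h
        exact List.lex_cons_iff.mp h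
      have hrk2 : ISA (SA (ISA (i - 1) - 1) + 1) < ISA i := hrank _ _ hq'1 hin hlex2
      have hab2 : List.Lex (· < ·) (sfx T n (SA (ISA (i - 1) - 1) + 1))
          (sfx T n (SA (ISA i - 1))) ∨
          sfx T n (SA (ISA (i - 1) - 1) + 1) = sfx T n (SA (ISA i - 1)) := by
        rcases eq_or_lt_of_le (show ISA (SA (ISA (i - 1) - 1) + 1) ≤ ISA i - 1 by omega)
          with h | h
        · right
          have h3 := (hISA (SA (ISA (i - 1) - 1) + 1) hq'1).2.2
          rw [← h, h3]
        · left
          have h3 := (hISA (SA (ISA (i - 1) - 1) + 1) hq'1).2.2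
          have h4 := hlexmono _ _ h (by omega)
          rwa [h3] at h4
      have h4 := lcp_mono _ _ _ hab2 hlexqi
      rw [← hPi] at h4
      omega
    omega
  -- accumulate the step along a reducible run
  have key : ∀ d p, p ∈ I → p + d < n → (∀ j, p < j → j ≤ p + d → j ∉ I) →
      PLCP (p + d) + d = PLCP p := by
    intro d
    induction d with
    | zero => intro p _ _ _; simp
    | succ d ih =>
      intro p hp hlt hnot
      have h1 : p + d + 1 ∉ I := hnot _ (by omega) (by omega)
      have h2 := step (p + d + 1) (by omega) (by omega) h1
      have h3 := ih p hp (by omega) (fun j hj1 hj2 => hnot j hj1 (by omega))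
      have e : p + d + 1 - 1 = p + d := by omega
      rw [e] at h2
      have e2 : p + (d + 1) = p + d + 1 := by omega
      rw [e2]
      omega
  refine ⟨hzero, ?_⟩
  intro i hin p hp
  obtain ⟨⟨hpI, hpi⟩, hub⟩ := hp
  have hnot : ∀ j, p < j → j ≤ i → j ∉ I := by
    intro j hj1 hj2 hjI
    have := hub ⟨hjI, hj2⟩
    omega
  have e : i = p + (i - p) := by omega
  have h := key (i - p) p hpI (by omega) (fun j hj1 hj2 => hnot j hj1 (by omega))
  rw [← e] at h
  exact h
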